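/- The limit as α → +∞ of α^2 · ( α^2 [φ(α) - αΦ(-α)] / φ(α) − 1 ) equals -3, where φ is the standard normal density and Φ the standard normal CDF. -/

import Mathlib

open MeasureTheory Filter

/-- Standard normal probability density function. -/
noncomputable def stdNormalPDF (x : ℝ) : ℝ :=
  (Real.sqrt (2 * Real.pi))⁻¹ * Real.exp (-(x ^ 2) / 2)

/-- Standard normal cumulative distribution function. -/
noncomputable def stdNormalCDF (x : ℝ) : ℝ :=
  ∫ t in Set.Iic x, stdNormalPDF t

lemma pdf_pos (x : ℝ) : 0 < stdNormalPDF x := by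
  unfold stdNormalPDF
  positivity

lemma pdf_cont : Continuous stdNormalPDF := by
  unfold stdNormalPDF
  continuity

lemma pdf_integrable : Integrable stdNormalPDF := by
  have h := integrable_exp_neg_mul_sq (b := (1:ℝ)/2) (by norm_num)
  have : stdNormalPDF = fun x => (Real.sqrt (2 * Real.pi))⁻¹ * Real.exp (-(1/2) * x ^ 2) := by
    funext x; unfold stdNormalPDF; ring_nf
  rw [this]
  exact h.const_mul _

lemma hasDerivAt_pdf (x : ℝ) : HasDerivAt stdNormalPDF (-x * stdNormalPDF x) x := by
  have h1 : HasDerivAt (fun x : ℝ => -(x ^ 2) / 2) (-x) x := by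
    have := ((hasDerivAt_pow 2 x).neg).div_const 2
    simpa using this.congr_deriv (by ring)
  have h2 := (h1.exp).const_mul (Real.sqrt (2 * Real.pi))⁻¹
  unfold stdNormalPDF
  exact h2.congr_deriv (by ring)

lemma aux_integrable : Integrable (fun t : ℝ => -t * Real.exp (-(t ^ 2) / 2)) := by
  have hg : Integrable (fun t : ℝ => 2 * Real.exp (-(1/4) * t ^ 2)) :=
    (integrable_exp_neg_mul_sq (by norm_num)).const_mul 2
  refine hg.mono' (Continuous.aestronglyMeasurable (by continuity)) ?_
  refine Eventually.of_forall fun t => ?_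
  rw [norm_mul, norm_neg, Real.norm_eq_abs, Real.norm_eq_abs,
    abs_of_pos (Real.exp_pos _)]
  have h1 : |t| ≤ 2 * Real.exp (t ^ 2 / 4) := by
    have := Real.add_one_le_exp (t ^ 2 / 4)
    nlinarith [sq_nonneg (|t| - 2), sq_abs t, abs_nonneg t]
  have h2 : (2 : ℝ) * Real.exp (-(1/4) * t ^ 2)
      = 2 * Real.exp (t ^ 2 / 4) * Real.exp (-(t ^ 2) / 2) := by
    rw [mul_assoc, ← Real.exp_add]; ring_nf
  rw [h2]
  exact mul_le_mul_of_nonneg_right h1 (Real.exp_pos _).le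

lemma sq_tendsto : Tendsto (fun t : ℝ => t ^ 2) atBot atTop := by
  have h : Tendsto (Neg.neg : ℝ → ℝ) atBot atTop := tendsto_neg_atBot_atTop
  have h2 := (tendsto_pow_atTop (by norm_num : (2:ℕ) ≠ 0)).comp h
  exact h2.congr fun x => by simp [Function.comp]

lemma exp_sq_tendsto : Tendsto (fun t : ℝ => Real.exp (-(t ^ 2) / 2)) atBot (nhds 0) := by
  have h1 : Tendsto (fun t : ℝ => -(t ^ 2) / 2) atBot atBot := by
    have h2 : Tendsto (fun t : ℝ => -(t ^ 2)) atBot atBot := tendsto_neg_atBot_iff.mpr sq_tendsto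
    exact h2.atBot_div_const (by norm_num)
  exact Real.tendsto_exp_atBot.comp h1

lemma expderiv (x : ℝ) : HasDerivAt (fun t : ℝ => Real.exp (-(t ^ 2) / 2)) (-x * Real.exp (-(x ^ 2) / 2)) x := by
  have h1 : HasDerivAt (fun t : ℝ => -(t ^ 2) / 2) (-x) x := by
    have := ((hasDerivAt_pow 2 x).neg).div_const 2
    simpa using this.congr_deriv (by ring)
  simpa using h1.exp.congr_deriv (by ring)

lemma aux_int_eq (y : ℝ) :
    ∫ t in Set.Iic y, -t * Real.exp (-(t ^ 2) / 2) = Real.exp (-(y ^ 2) / 2) := by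
  have h := MeasureTheory.integral_Iic_of_hasDerivAt_of_tendsto'
    (f := fun t : ℝ => Real.exp (-(t ^ 2) / 2))
    (f' := fun t : ℝ => -t * Real.exp (-(t ^ 2) / 2)) (a := y) (m := 0)
    (fun x _ => expderiv x) aux_integrable.integrableOn exp_sq_tendsto
  simpa using h

lemma cdf_nonneg (y : ℝ) : 0 ≤ stdNormalCDF y :=
  setIntegral_nonneg measurableSet_Iic fun t _ => (pdf_pos t).le

lemma cdf_le (y : ℝ) (hy : y ≤ -1) :
    stdNormalCDF y ≤ (Real.sqrt (2 * Real.pi))⁻¹ * Real.exp (-(y ^ 2) / 2) := by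
  have hmono : stdNormalCDF y
      ≤ ∫ t in Set.Iic y, (Real.sqrt (2 * Real.pi))⁻¹ * (-t * Real.exp (-(t ^ 2) / 2)) := by
    refine setIntegral_mono_on pdf_integrable.integrableOn
      ((aux_integrable.const_mul _).integrableOn) measurableSet_Iic fun t ht => ?_
    have ht1 : (1 : ℝ) ≤ -t := by
      simp only [Set.mem_Iic] at ht; linarith
    unfold stdNormalPDF
    have h : Real.exp (-(t ^ 2) / 2) ≤ -t * Real.exp (-(t ^ 2) / 2) := by
      nlinarith [Real.exp_pos (-(t ^ 2) / 2)]
    have hc : (0:ℝ) ≤ (Real.sqrt (2 * Real.pi))⁻¹ := by positivity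
    exact mul_le_mul_of_nonneg_left h hc
  calc stdNormalCDF y ≤ _ := hmono
    _ = (Real.sqrt (2 * Real.pi))⁻¹ * Real.exp (-(y ^ 2) / 2) := by
        rw [integral_const_mul, aux_int_eq]

lemma tendsto_cdf_atBot : Tendsto stdNormalCDF atBot (nhds 0) := by
  have hub : Tendsto (fun y : ℝ => (Real.sqrt (2 * Real.pi))⁻¹ * Real.exp (-(y ^ 2) / 2))
      atBot (nhds 0) := by
    simpa using exp_sq_tendsto.const_mul (Real.sqrt (2 * Real.pi))⁻¹
  refine tendsto_of_tendsto_of_tendsto_of_le_of_le' tendsto_const_nhds hub ?_ ?_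
  · exact Eventually.of_forall fun y => cdf_nonneg y
  · filter_upwards [Filter.Iic_mem_atBot (-1 : ℝ)] with y hy using cdf_le y hy

lemma cdf_eq (x : ℝ) :
    stdNormalCDF x = stdNormalCDF 0 + ∫ t in (0:ℝ)..x, stdNormalPDF t := by
  have h := intervalIntegral.integral_Iic_sub_Iic
    (pdf_integrable.integrableOn (s := Set.Iic (0:ℝ)))
    (pdf_integrable.integrableOn (s := Set.Iic x))
  unfold stdNormalCDF
  linarith [h]

lemma hasDerivAt_cdf (x : ℝ) : HasDerivAt stdNormalCDF (stdNormalPDF x) x := by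
  have h : HasDerivAt (fun y => ∫ t in (0:ℝ)..y, stdNormalPDF t) (stdNormalPDF x) x := by
    refine intervalIntegral.integral_hasDerivAt_right
      pdf_integrable.intervalIntegrable
      ?_ pdf_cont.continuousAt
    exact pdf_cont.stronglyMeasurableAtFilter _ _
  have := (h.const_add (stdNormalCDF 0))
  refine HasDerivAt.congr_of_eventuallyEq this ?_
  filter_upwards [] with y using (cdf_eq y)

lemma pdf_even (x : ℝ) : stdNormalPDF (-x) = stdNormalPDF x := by
  unfold stdNormalPDF; rw [neg_pow]; norm_num

lemma hasDerivAt_cdf_neg (x : ℝ) :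
    HasDerivAt (fun y : ℝ => stdNormalCDF (-y)) (-stdNormalPDF x) x := by
  have h := (hasDerivAt_cdf (-x)).comp x (hasDerivAt_neg x)
  simpa [pdf_even, Function.comp_def] using h

noncomputable def Pm (x : ℝ) : ℝ := (x^4 - x^2 + 3) / x^5

noncomputable def gm (x : ℝ) : ℝ := stdNormalCDF (-x) - stdNormalPDF x * Pm x

lemma hasDerivAt_gm {x : ℝ} (hx : x ≠ 0) :
    HasDerivAt gm (15 * stdNormalPDF x / x ^ 6) x := by
  have hx5 : x ^ 5 ≠ 0 := pow_ne_zero _ hx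
  have hnum : HasDerivAt (fun x : ℝ => x^4 - x^2 + 3) (4*x^3 - 2*x) x := by
    have := ((hasDerivAt_pow 4 x).sub (hasDerivAt_pow 2 x)).add_const 3
    simpa using this.congr_deriv (by ring)
  have hden : HasDerivAt (fun x : ℝ => x^5) (5*x^4) x := by
    simpa using (hasDerivAt_pow 5 x).congr_deriv (by ring)
  have hP : HasDerivAt Pm
      (((4*x^3 - 2*x) * x^5 - (x^4 - x^2 + 3) * (5*x^4)) / (x^5)^2) x :=
    hnum.div hden hx5
  have hprod := (hasDerivAt_pdf x).mul hP
  have hg := (hasDerivAt_cdf_neg x).sub hprod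
  refine hg.congr_deriv ?_
  unfold stdNormalPDF Pm
  field_simp
  ring

lemma tendsto_pdf_atTop : Tendsto stdNormalPDF atTop (nhds 0) := by
  have h1 : Tendsto (fun t : ℝ => -(t ^ 2) / 2) atTop atBot := by
    have h2 : Tendsto (fun t : ℝ => -(t ^ 2)) atTop atBot :=
      tendsto_neg_atBot_iff.mpr (tendsto_pow_atTop (by norm_num : (2:ℕ) ≠ 0))
    exact h2.atBot_div_const (by norm_num)
  have h3 : Tendsto (fun x : ℝ => Real.exp (-(x ^ 2) / 2)) atTop (nhds 0) :=
    Real.tendsto_exp_atBot.comp h1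
  have h4 := h3.const_mul (Real.sqrt (2 * Real.pi))⁻¹
  have he : stdNormalPDF = fun x : ℝ => (Real.sqrt (2 * Real.pi))⁻¹ * Real.exp (-(x ^ 2) / 2) := rfl
  rw [he]
  simpa using h4

lemma tendsto_Pm : Tendsto Pm atTop (nhds 0) := by
  have h : ∀ k : ℕ, k ≠ 0 → Tendsto (fun x : ℝ => (x ^ k)⁻¹) atTop (nhds 0) :=
    fun k hk => (tendsto_pow_atTop hk).inv_tendsto_atTop
  have h1 := ((h 1 one_ne_zero).sub (h 3 (by norm_num))).add ((h 5 (by norm_num)).const_mul 3)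
  have h2 : Tendsto (fun x : ℝ => (x^1)⁻¹ - (x^3)⁻¹ + 3 * (x^5)⁻¹) atTop (nhds 0) := by
    simpa using h1
  refine h2.congr' ?_
  filter_upwards [eventually_gt_atTop (0:ℝ)] with x hx
  have hx' : x ≠ 0 := ne_of_gt hx
  unfold Pm
  field_simp

lemma tendsto_gm : Tendsto gm atTop (nhds 0) := by
  have h1 : Tendsto (fun x : ℝ => stdNormalCDF (-x)) atTop (nhds 0) :=
    tendsto_cdf_atBot.comp tendsto_neg_atTop_atBot
  have h2 := tendsto_pdf_atTop.mul tendsto_Pm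
  exact (by simpa using h1.sub h2 : Tendsto (fun x => stdNormalCDF (-x) - stdNormalPDF x * Pm x) atTop (nhds 0))

lemma gm_nonpos {x : ℝ} (hx : 0 < x) : gm x ≤ 0 := by
  have hmono : StrictMonoOn gm (Set.Ici x) := by
    refine strictMonoOn_of_deriv_pos (convex_Ici x) ?_ ?_
    · intro y hy
      exact (hasDerivAt_gm (by rintro rfl; simp at hy; linarith)).continuousAt.continuousWithinAt
    · intro y hy
      rw [interior_Ici] at hy
      have hy0 : 0 < y := lt_trans hx hy
      rw [(hasDerivAt_gm (ne_of_gt hy0)).deriv]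
      have := pdf_pos y
      positivity
  refine ge_of_tendsto tendsto_gm ?_
  filter_upwards [eventually_ge_atTop x] with y hy
  rcases eq_or_lt_of_le hy with rfl | hlt
  · exact le_rfl
  · exact le_of_lt (hmono Set.self_mem_Ici hy hlt)

noncomputable def Qm (x : ℝ) : ℝ := (x^6 - x^4 + 3*x^2 - 15) / x^7

noncomputable def hm (x : ℝ) : ℝ := stdNormalCDF (-x) - stdNormalPDF x * Qm x

lemma hasDerivAt_hm {x : ℝ} (hx : x ≠ 0) :
    HasDerivAt hm (-(105 * stdNormalPDF x / x ^ 8)) x := by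
  have hx7 : x ^ 7 ≠ 0 := pow_ne_zero _ hx
  have hnum : HasDerivAt (fun x : ℝ => x^6 - x^4 + 3*x^2 - 15)
      (6*x^5 - 4*x^3 + 6*x) x := by
    have := (((hasDerivAt_pow 6 x).sub (hasDerivAt_pow 4 x)).add
      ((hasDerivAt_pow 2 x).const_mul 3)).sub_const 15
    simpa using this.congr_deriv (by ring)
  have hden : HasDerivAt (fun x : ℝ => x^7) (7*x^6) x := by
    simpa using (hasDerivAt_pow 7 x).congr_deriv (by ring)
  have hQ : HasDerivAt Qm
      (((6*x^5 - 4*x^3 + 6*x) * x^7 - (x^6 - x^4 + 3*x^2 - 15) * (7*x^6)) / (x^7)^2) x :=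
    hnum.div hden hx7
  have hprod := (hasDerivAt_pdf x).mul hQ
  have hg := (hasDerivAt_cdf_neg x).sub hprod
  refine hg.congr_deriv ?_
  unfold stdNormalPDF Qm
  field_simp
  ring

lemma tendsto_Qm : Tendsto Qm atTop (nhds 0) := by
  have h : ∀ k : ℕ, k ≠ 0 → Tendsto (fun x : ℝ => (x ^ k)⁻¹) atTop (nhds 0) :=
    fun k hk => (tendsto_pow_atTop hk).inv_tendsto_atTop
  have h1 := (((h 1 one_ne_zero).sub (h 3 (by norm_num))).add
    ((h 5 (by norm_num)).const_mul 3)).sub ((h 7 (by norm_num)).const_mul 15)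
  have h2 : Tendsto (fun x : ℝ => (x^1)⁻¹ - (x^3)⁻¹ + 3 * (x^5)⁻¹ - 15 * (x^7)⁻¹)
      atTop (nhds 0) := by simpa using h1
  refine h2.congr' ?_
  filter_upwards [eventually_gt_atTop (0:ℝ)] with x hx
  have hx' : x ≠ 0 := ne_of_gt hx
  unfold Qm
  field_simp

lemma tendsto_hm : Tendsto hm atTop (nhds 0) := by
  have h1 : Tendsto (fun x : ℝ => stdNormalCDF (-x)) atTop (nhds 0) :=
    tendsto_cdf_atBot.comp tendsto_neg_atTop_atBot
  have h2 := tendsto_pdf_atTop.mul tendsto_Qm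
  exact (by simpa using h1.sub h2 : Tendsto (fun x => stdNormalCDF (-x) - stdNormalPDF x * Qm x) atTop (nhds 0))

lemma hm_nonneg {x : ℝ} (hx : 0 < x) : 0 ≤ hm x := by
  have hmono : StrictAntiOn hm (Set.Ici x) := by
    refine strictAntiOn_of_deriv_neg (convex_Ici x) ?_ ?_
    · intro y hy
      exact (hasDerivAt_hm (by rintro rfl; simp at hy; linarith)).continuousAt.continuousWithinAt
    · intro y hy
      rw [interior_Ici] at hy
      have hy0 : 0 < y := lt_trans hx hy
      rw [(hasDerivAt_hm (ne_of_gt hy0)).deriv]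
      have := pdf_pos y
      have h8 : (0:ℝ) < y ^ 8 := by positivity
      have : (0:ℝ) < 105 * stdNormalPDF y / y ^ 8 := by positivity
      linarith
  refine le_of_tendsto tendsto_hm ?_
  filter_upwards [eventually_ge_atTop x] with y hy
  rcases eq_or_lt_of_le hy with rfl | hlt
  · exact le_rfl
  · exact le_of_lt (hmono Set.self_mem_Ici hy hlt)

theorem mills_ratio_second_order_residual :
    Tendsto
      (fun α : ℝ =>
        α ^ 2 * (α ^ 2 * (stdNormalPDF α - α * stdNormalCDF (-α)) / stdNormalPDF α - 1))
      atTop (nhds (-3)) := by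
  have hup : Tendsto (fun α : ℝ => -3 + 15 * (α ^ 2)⁻¹) atTop (nhds (-3)) := by
    have h0 := ((tendsto_pow_atTop (by norm_num : (2:ℕ) ≠ 0)).inv_tendsto_atTop
      (f := fun x : ℝ => x ^ 2)).const_mul (15:ℝ)
    simpa using (tendsto_const_nhds (x := (-3:ℝ))).add h0
  refine tendsto_of_tendsto_of_tendsto_of_le_of_le' tendsto_const_nhds hup ?_ ?_ <;>
    filter_upwards [eventually_gt_atTop (0:ℝ)] with α hα
  · -- lower bound
    have hφ := pdf_pos α
    have hα' : α ≠ 0 := ne_of_gt hα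
    have hE : α ^ 2 * (α ^ 2 * (stdNormalPDF α - α * stdNormalCDF (-α)) / stdNormalPDF α - 1)
        = α^4 - α^2 - α^5 * stdNormalCDF (-α) / stdNormalPDF α := by
      field_simp
      ring
    have h1 : stdNormalCDF (-α) ≤ stdNormalPDF α * Pm α := by
      have := gm_nonpos hα
      unfold gm at this
      linarith
    have h2 : α^5 * stdNormalCDF (-α) ≤ (α^4 - α^2 + 3) * stdNormalPDF α := by
      calc α^5 * stdNormalCDF (-α) ≤ α^5 * (stdNormalPDF α * Pm α) :=
            mul_le_mul_of_nonneg_left h1 (by positivity)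
        _ = (α^4 - α^2 + 3) * stdNormalPDF α := by unfold Pm; field_simp
    have h3 : α^5 * stdNormalCDF (-α) / stdNormalPDF α ≤ α^4 - α^2 + 3 :=
      (div_le_iff₀ hφ).mpr h2
    rw [hE]
    linarith
  · -- upper bound
    have hφ := pdf_pos α
    have hα' : α ≠ 0 := ne_of_gt hα
    have hE : α ^ 2 * (α ^ 2 * (stdNormalPDF α - α * stdNormalCDF (-α)) / stdNormalPDF α - 1)
        = α^4 - α^2 - α^5 * stdNormalCDF (-α) / stdNormalPDF α := by
      field_simp
      ring
    have h1 : stdNormalPDF α * Qm α ≤ stdNormalCDF (-α) := by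
      have := hm_nonneg hα
      unfold hm at this
      linarith
    have h2 : (α^4 - α^2 + 3 - 15 * (α^2)⁻¹) * stdNormalPDF α ≤ α^5 * stdNormalCDF (-α) := by
      calc (α^4 - α^2 + 3 - 15 * (α^2)⁻¹) * stdNormalPDF α
          = α^5 * (stdNormalPDF α * Qm α) := by unfold Qm; field_simp
        _ ≤ α^5 * stdNormalCDF (-α) := mul_le_mul_of_nonneg_left h1 (by positivity)
    have h3 : α^4 - α^2 + 3 - 15 * (α^2)⁻¹ ≤ α^5 * stdNormalCDF (-α) / stdNormalPDF α :=
      (le_div_iff₀ hφ).mpr h2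
    rw [hE]
    linarith
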